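/- arXiv:1304.3121 — 4 statements merged into one kernel-verified Lean document; each statement's English description precedes it below -/
import Mathlib

section
/- Compositionality of '⊗' with respect to the step firing semantics: for nets with boundaries M : l → m and N : k → n and markings X, X′ ⊆ P_M, Y, Y′ ⊆ P_N, there is a transition (X+Y) →⟨α,β⟩ (X′+Y′) in the labelled transition system ⟦M ⊗ N⟧ (with α ⊆ [l+k], β ⊆ [m+n]) if and only if X →⟨α ∩ [l], β ∩ [m]⟩ X′ in ⟦M⟧ and Y →⟨{i | l+i ∈ α}, {j | m+j ∈ β}⟩ Y′ in ⟦N⟧. -/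
/-! Core definitions: nets with boundaries (Sobocinski et al.),
composition, tensor, isomorphism, step firing semantics, ports,
connections, networks, bases, wiring expressions and decompositions. -/

namespace NWB

/-- A net with boundaries `N : k → l` (without the contention axioms,
which are packaged separately in `IsContention`). -/
structure NetB (k l : ℕ) : Type 1 where
  P : Type
  T : Type
  finP : Finite P
  finT : Finite T
  pre : T → Set P
  post : T → Set P
  src : T → Set (Fin k)
  tgt : T → Set (Fin l)
  con : T → T → Prop

/-- The contention relation axioms: reflexive, symmetric, and forced whenever
two transitions share a pre-place, post-place, or boundary port. -/
def IsContention {k l : ℕ} (N : NetB k l) : Prop :=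
  (∀ t, N.con t t) ∧ (∀ t u, N.con t u → N.con u t) ∧
  (∀ t u,
    ((N.pre t ∩ N.pre u).Nonempty ∨ (N.post t ∩ N.post u).Nonempty ∨
     (N.src t ∩ N.src u).Nonempty ∨ (N.tgt t ∩ N.tgt u).Nonempty) → N.con t u)

def setPre {k l : ℕ} (N : NetB k l) (U : Set N.T) : Set N.P := ⋃ u ∈ U, N.pre u
def setPost {k l : ℕ} (N : NetB k l) (U : Set N.T) : Set N.P := ⋃ u ∈ U, N.post u
def setSrc {k l : ℕ} (N : NetB k l) (U : Set N.T) : Set (Fin k) := ⋃ u ∈ U, N.src u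
def setTgt {k l : ℕ} (N : NetB k l) (U : Set N.T) : Set (Fin l) := ⋃ u ∈ U, N.tgt u

/-- Mutually independent set of transitions: no two distinct members in contention. -/
def MI {k l : ℕ} (N : NetB k l) (U : Set N.T) : Prop :=
  ∀ u ∈ U, ∀ v ∈ U, N.con u v → u = v

/-- Contention lifted to sets of transitions. -/
def setCon {k l : ℕ} (N : NetB k l) (U V : Set N.T) : Prop :=
  ∃ u ∈ U, ∃ v ∈ V, N.con u v

/-- A synchronisation between `M : l → m` and `N : m → n`. -/
structure Sync {l m n : ℕ} (M : NetB l m) (N : NetB m n) where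
  U : Set M.T
  V : Set N.T
  miU : MI M U
  miV : MI N V
  bd : setTgt M U = setSrc N V

def Sync.Trivial {l m n : ℕ} {M : NetB l m} {N : NetB m n} (s : Sync M N) : Prop :=
  s.U = ∅ ∧ s.V = ∅

/-- A minimal synchronisation: non-trivial, and every componentwise-smaller
synchronisation is trivial or equal to it. -/
def Sync.Minimal {l m n : ℕ} {M : NetB l m} {N : NetB m n} (s : Sync M N) : Prop :=
  ¬ s.Trivial ∧
  ∀ s' : Sync M N, s'.U ⊆ s.U → s'.V ⊆ s.V → (s'.Trivial ∨ (s'.U = s.U ∧ s'.V = s.V))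

theorem sync_finite {l m n : ℕ} (M : NetB l m) (N : NetB m n) : Finite (Sync M N) := by
  haveI := M.finT; haveI := N.finT
  apply Finite.of_injective (fun s : Sync M N => (s.U, s.V))
  intro s s' h
  simp only [Prod.mk.injEq] at h
  obtain ⟨h1, h2⟩ := h
  cases s; cases s'
  simp_all

/-- Composition along a common boundary. -/
def comp {l m n : ℕ} (M : NetB l m) (N : NetB m n) : NetB l n where
  P := M.P ⊕ N.P
  T := {s : Sync M N // s.Minimal}
  finP := by haveI := M.finP; haveI := N.finP; exact inferInstance
  finT := by haveI := sync_finite M N; exact inferInstance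
  pre s := (Sum.inl '' setPre M s.1.U) ∪ (Sum.inr '' setPre N s.1.V)
  post s := (Sum.inl '' setPost M s.1.U) ∪ (Sum.inr '' setPost N s.1.V)
  src s := setSrc M s.1.U
  tgt s := setTgt N s.1.V
  con s s' := setCon M s.1.U s'.1.U ∨ setCon N s.1.V s'.1.V

/-- Tensor product of nets with boundaries. -/
def tensor {l m k n : ℕ} (M : NetB l m) (N : NetB k n) : NetB (l + k) (m + n) where
  P := M.P ⊕ N.P
  T := M.T ⊕ N.T
  finP := by haveI := M.finP; haveI := N.finP; exact inferInstance
  finT := by haveI := M.finT; haveI := N.finT; exact inferInstance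
  pre t := match t with
    | Sum.inl t => Sum.inl '' M.pre t
    | Sum.inr t => Sum.inr '' N.pre t
  post t := match t with
    | Sum.inl t => Sum.inl '' M.post t
    | Sum.inr t => Sum.inr '' N.post t
  src t := match t with
    | Sum.inl t => Fin.castAdd k '' M.src t
    | Sum.inr t => Fin.natAdd l '' N.src t
  tgt t := match t with
    | Sum.inl t => Fin.castAdd n '' M.tgt t
    | Sum.inr t => Fin.natAdd m '' N.tgt t
  con t u := match t, u with
    | Sum.inl t, Sum.inl u => M.con t u
    | Sum.inr t, Sum.inr u => N.con t u
    | _, _ => False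

/-- Isomorphism of nets with boundaries: bijections on places and transitions
preserving pre-sets, post-sets, boundary maps and contention. -/
structure NetIso {k l : ℕ} (M N : NetB k l) where
  ep : M.P ≃ N.P
  et : M.T ≃ N.T
  pre_eq : ∀ t, N.pre (et t) = ep '' M.pre t
  post_eq : ∀ t, N.post (et t) = ep '' M.post t
  src_eq : ∀ t, N.src (et t) = M.src t
  tgt_eq : ∀ t, N.tgt (et t) = M.tgt t
  con_iff : ∀ t u, N.con (et t) (et u) ↔ M.con t u

def Iso {k l : ℕ} (M N : NetB k l) : Prop := Nonempty (NetIso M N)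

/-- Transport a net along equalities of its boundary sizes. -/
def castNet {k l k' l' : ℕ} (h1 : k = k') (h2 : l = l') (N : NetB k l) : NetB k' l' where
  P := N.P
  T := N.T
  finP := N.finP
  finT := N.finT
  pre := N.pre
  post := N.post
  src t := Fin.cast h1 '' N.src t
  tgt t := Fin.cast h2 '' N.tgt t
  con := N.con

def emptyNet : NetB 0 0 where
  P := Empty
  T := Empty
  finP := inferInstance
  finT := inferInstance
  pre t := t.elim
  post t := t.elim
  src t := t.elim
  tgt t := t.elim
  con t _ := t.elim

/-- The step firing semantics: `Fires N X X' α β` iff the LTS `⟦N⟧` has a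
transition `X →⟨α,β⟩ X'`. -/
def Fires {k l : ℕ} (N : NetB k l) (X X' : Set N.P) (α : Set (Fin k)) (β : Set (Fin l)) :
    Prop :=
  ∃ U : Set N.T, MI N U ∧ setPre N U ⊆ X ∧ setPost N U ∩ X = ∅ ∧
    X' = (X \ setPre N U) ∪ setPost N U ∧ setSrc N U = α ∧ setTgt N U = β

/-! ### Ports, connections and networks -/

/-- The ports of a net: an in-port and an out-port for each place,
together with the left and right boundary ports. -/
def Port {k l : ℕ} (N : NetB k l) : Type := (N.P ⊕ N.P) ⊕ (Fin k ⊕ Fin l)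

def portIn {k l : ℕ} {N : NetB k l} (p : N.P) : Port N := Sum.inl (Sum.inl p)
def portOut {k l : ℕ} {N : NetB k l} (p : N.P) : Port N := Sum.inl (Sum.inr p)
def bLeft {k l : ℕ} {N : NetB k l} (i : Fin k) : Port N := Sum.inr (Sum.inl i)
def bRight {k l : ℕ} {N : NetB k l} (j : Fin l) : Port N := Sum.inr (Sum.inr j)

/-- The portset of a transition. -/
def tports {k l : ℕ} (N : NetB k l) (t : N.T) : Set (Port N) :=
  (portOut '' N.pre t) ∪ (portIn '' N.post t) ∪ (bLeft '' N.src t) ∪ (bRight '' N.tgt t)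

/-- The connection of a port `q`: the portsets (minus `q`) of all transitions
properly connecting to `q`. -/
def conn {k l : ℕ} (N : NetB k l) (q : Port N) : Set (Set (Port N)) :=
  { K | ∃ t : N.T, {q} ⊂ tports N t ∧ K = tports N t \ {q} }

/-- The connection of `q` restricted to a set `R` of ports. -/
def connR {k l : ℕ} (N : NetB k l) (R : Set (Port N)) (q : Port N) :
    Set (Set (Port N)) :=
  { K' | ∃ K ∈ conn N q, (K ∩ R).Nonempty ∧ K' = K ∩ R }

/-- Extended ports of the left part of an oriented partition. -/
def eportsL {k l : ℕ} (N : NetB k l) (Pl : Set N.P) : Set (Port N) :=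
  (portIn '' Pl) ∪ (portOut '' Pl) ∪ Set.range (bLeft (N := N))

/-- Extended ports of the right part of an oriented partition. -/
def eportsR {k l : ℕ} (N : NetB k l) (Pr : Set N.P) : Set (Port N) :=
  (portIn '' Pr) ∪ (portOut '' Pr) ∪ Set.range (bRight (N := N))

/-- The network `net(P_l → P_r)`. -/
def networkLR {k l : ℕ} (N : NetB k l) (Pl Pr : Set N.P) :
    Set (Set (Set (Port N))) :=
  { c | ∃ q ∈ eportsL N Pl, c = connR N (eportsR N Pr) q }

/-- The network `net(P_r → P_l)`. -/
def networkRL {k l : ℕ} (N : NetB k l) (Pl Pr : Set N.P) :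
    Set (Set (Set (Port N))) :=
  { c | ∃ q ∈ eportsR N Pr, c = connR N (eportsL N Pl) q }

/-- `b` is a basis of the network `M`: every connection in `M` is a union of
basis connections. -/
def IsBasis {C : Type} {m : ℕ} (b : Fin m → Set C) (M : Set (Set C)) : Prop :=
  ∀ c ∈ M, ∃ S : Finset (Fin m), c = ⋃ i ∈ S, b i

/-- The dimension of a network: the size of its smallest basis. -/
noncomputable def netDim {C : Type} (M : Set (Set C)) : ℕ :=
  sInf { m | ∃ b : Fin m → Set C, IsBasis b M }

/-- Purity of a composition `N_l ; N_r`: no transition of either component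
connects to two different shared boundary ports. -/
def Pure {k n l : ℕ} (Nl : NetB k n) (Nr : NetB n l) : Prop :=
  (∀ j : Fin n, ∀ K ∈ conn Nl (bRight j), ∀ i : Fin n, bRight i ∉ K) ∧
  (∀ j : Fin n, ∀ K ∈ conn Nr (bLeft j), ∀ i : Fin n, bLeft i ∉ K)

/-! ### Wiring expressions and decompositions -/

/-- Nets with boundaries of arbitrary boundary sizes. -/
def NetS : Type 1 := Σ (k : ℕ) (l : ℕ), NetB k l

/-- Composition on `NetS` (junk value on boundary mismatch). -/
def seqS (X Y : NetS) : NetS :=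
  if h : X.2.1 = Y.1 then ⟨X.1, Y.2.1, comp (castNet rfl h X.2.2) Y.2.2⟩
  else ⟨0, 0, emptyNet⟩

def tenS (X Y : NetS) : NetS := ⟨X.1 + Y.1, X.2.1 + Y.2.1, tensor X.2.2 Y.2.2⟩

/-- Wiring expressions: binary trees with `;` and `⊗` nodes and variables at
the leaves. -/
inductive WExpr (V : Type) : Type
  | leaf : V → WExpr V
  | seq : WExpr V → WExpr V → WExpr V
  | ten : WExpr V → WExpr V → WExpr V

/-- Semantics of a wiring expression under a variable assignment. -/
def sem {V : Type} (A : V → NetS) : WExpr V → NetS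
  | .leaf x => A x
  | .seq t₁ t₂ => seqS (sem A t₁) (sem A t₂)
  | .ten t₁ t₂ => tenS (sem A t₁) (sem A t₂)

/-- Compatibility of an assignment with an expression: at each `;` node the
shared boundaries match. -/
def WT {V : Type} (A : V → NetS) : WExpr V → Prop
  | .leaf _ => True
  | .seq t₁ t₂ => WT A t₁ ∧ WT A t₂ ∧ (sem A t₁).2.1 = (sem A t₂).1
  | .ten t₁ t₂ => WT A t₁ ∧ WT A t₂

/-- The wiring decomposition `(t, A)` has width `w`: every leaf net has
boundaries and number of places `≤ w`, and every subexpression has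
boundaries `≤ w`. -/
def HasWidth {V : Type} (A : V → NetS) (w : ℕ) : WExpr V → Prop
  | .leaf x => (A x).1 ≤ w ∧ Nat.card (A x).2.2.P ≤ w ∧ (A x).2.1 ≤ w
  | .seq t₁ t₂ => HasWidth A w t₁ ∧ HasWidth A w t₂ ∧
      (sem A (.seq t₁ t₂)).1 ≤ w ∧ (sem A (.seq t₁ t₂)).2.1 ≤ w
  | .ten t₁ t₂ => HasWidth A w t₁ ∧ HasWidth A w t₂ ∧
      (sem A (.ten t₁ t₂)).1 ≤ w ∧ (sem A (.ten t₁ t₂)).2.1 ≤ w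

/-- `(t, A)` is a wiring decomposition of `N : k → l`: the assignment maps
variables to genuine nets with boundaries, is compatible with `t`, and
`⟦t⟧_A ≅ N`. -/
def IsDecompOf {V : Type} {k l : ℕ} (A : V → NetS) (t : WExpr V) (N : NetB k l) : Prop :=
  (∀ x, IsContention (A x).2.2) ∧ WT A t ∧
  ∃ (h1 : (sem A t).1 = k) (h2 : (sem A t).2.1 = l),
    Iso (castNet h1 h2 (sem A t).2.2) N

/-- A net has decomposition width `w` if it has a wiring decomposition of
width `w`. -/
def HasDecompWidth {k l : ℕ} (N : NetB k l) (w : ℕ) : Prop :=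
  ∃ (Var : Type) (A : Var → NetS) (t : WExpr Var),
    IsDecompOf A t N ∧ HasWidth A w t

/-- A pure wiring decomposition: at every `;` node the composition of the two
subexpression nets is pure. -/
def PureExpr {V : Type} (A : V → NetS) : WExpr V → Prop
  | .leaf _ => True
  | .seq t₁ t₂ => PureExpr A t₁ ∧ PureExpr A t₂ ∧
      ∀ (h : (sem A t₁).2.1 = (sem A t₂).1),
        Pure (castNet rfl h (sem A t₁).2.2) (sem A t₂).2.2
  | .ten t₁ t₂ => PureExpr A t₁ ∧ PureExpr A t₂

/-- One step of reassociation of `;` or `⊗`, anywhere inside an expression. -/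
inductive AssocStep {V : Type} : WExpr V → WExpr V → Prop
  | seqAssoc (a b c : WExpr V) : AssocStep (.seq (.seq a b) c) (.seq a (.seq b c))
  | tenAssoc (a b c : WExpr V) : AssocStep (.ten (.ten a b) c) (.ten a (.ten b c))
  | seqCongrL {a a' : WExpr V} (b : WExpr V) :
      AssocStep a a' → AssocStep (.seq a b) (.seq a' b)
  | seqCongrR (a : WExpr V) {b b' : WExpr V} :
      AssocStep b b' → AssocStep (.seq a b) (.seq a b')
  | tenCongrL {a a' : WExpr V} (b : WExpr V) :
      AssocStep a a' → AssocStep (.ten a b) (.ten a' b)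
  | tenCongrR (a : WExpr V) {b b' : WExpr V} :
      AssocStep b b' → AssocStep (.ten a b) (.ten a b')

/-- Equivalence of wiring expressions up to associativity of `;` and `⊗`. -/
def AssocEquiv {V : Type} : WExpr V → WExpr V → Prop := Relation.EqvGen AssocStep

/-! ### Concrete families of nets -/

/-- The clique net `C_n : 0 → 0`, with the minimal contention relation. -/
def clique (n : ℕ) : NetB 0 0 where
  P := Fin n
  T := {p : Fin n × Fin n // p.1 ≠ p.2}
  finP := inferInstance
  finT := inferInstance
  pre t := {t.1.1}
  post t := {t.1.2}
  src _ := ∅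
  tgt _ := ∅
  con t u := t.1.1 = u.1.1 ∨ t.1.2 = u.1.2

/-- The subset net `P_n : 0 → 0`: a place `S` (= `none`), places `[n]`, and for
each `A ⊆ [n]` a transition `S → A`; the minimal contention relation is total
since all pre-sets are `{S}`. -/
def subsetNet (n : ℕ) : NetB 0 0 where
  P := Option (Fin n)
  T := Set (Fin n)
  finP := inferInstance
  finT := inferInstance
  pre _ := {none}
  post A := some '' A
  src _ := ∅
  tgt _ := ∅
  con _ _ := True

/-- The tree net `T_Δ^{n,k} : 0 → 0`: places are nodes of the complete n-ary
tree of depth k (lists over `Fin n` of length ≤ k); each non-leaf node has a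
single transition to the set of its n children. The minimal contention
relation is equality. -/
def treeD (n k : ℕ) : NetB 0 0 where
  P := {l : List (Fin n) // l.length ≤ k}
  T := {l : List (Fin n) // l.length < k}
  finP := (List.finite_length_le (Fin n) k).to_subtype
  finT := (List.finite_length_lt (Fin n) k).to_subtype
  pre t := {⟨t.1, t.2.le⟩}
  post t := {p | ∃ i : Fin n, p.1 = t.1 ++ [i]}
  src _ := ∅
  tgt _ := ∅
  con t u := t = u

/-- The tree net `T_Λ^{n,k} : 0 → 0`: as `T_Δ^{n,k}` but with a separate
transition from each non-leaf node to each of its children. The minimal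
contention relation relates transitions with the same parent node. -/
def treeL (n k : ℕ) : NetB 0 0 where
  P := {l : List (Fin n) // l.length ≤ k}
  T := {l : List (Fin n) // l.length < k} × Fin n
  finP := (List.finite_length_le (Fin n) k).to_subtype
  finT := by
    haveI : Finite {l : List (Fin n) // l.length < k} :=
      (List.finite_length_lt (Fin n) k).to_subtype
    exact inferInstance
  pre t := {⟨t.1.1, t.1.2.le⟩}
  post t := {p | p.1 = t.1.1 ++ [t.2]}
  src _ := ∅
  tgt _ := ∅
  con t u := t.1 = u.1

/-- The grid net `G_n : 0 → 0`: places `[n] × [n]`, a transition from each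
place to its right neighbour and to its lower neighbour; the minimal
contention relation relates transitions sharing a pre-place or post-place. -/
def grid (n : ℕ) : NetB 0 0 where
  P := Fin n × Fin n
  T := {e : (Fin n × Fin n) × (Fin n × Fin n) //
        (e.2.1 = e.1.1 ∧ (e.2.2 : ℕ) = (e.1.2 : ℕ) + 1) ∨
        ((e.2.1 : ℕ) = (e.1.1 : ℕ) + 1 ∧ e.2.2 = e.1.2)}
  finP := inferInstance
  finT := inferInstance
  pre e := {e.1.1}
  post e := {e.1.2}
  src _ := ∅
  tgt _ := ∅
  con t u := t.1.1 = u.1.1 ∨ t.1.2 = u.1.2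

end NWB

namespace NWB

section TensorFires

variable {l m k n : ℕ} {M : NetB l m} {N : NetB k n}

private lemma castAdd_ne_natAdd (i : Fin l) (j : Fin k) :
    Fin.castAdd k i ≠ Fin.natAdd l j := by
  have := i.isLt
  simp only [ne_eq, Fin.ext_iff, Fin.coe_castAdd, Fin.coe_natAdd]
  omega

private lemma natAdd_injective :
    Function.Injective (Fin.natAdd l : Fin k → Fin (l + k)) := by
  intro a b h
  simp only [Fin.ext_iff, Fin.coe_natAdd] at h ⊢
  omega

private lemma fin_add_cases (c : Fin (l + k)) :
    (∃ i : Fin l, c = Fin.castAdd k i) ∨ (∃ j : Fin k, c = Fin.natAdd l j) := by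
  have hc := c.isLt
  rcases lt_or_ge (c : ℕ) l with h | h
  · exact Or.inl ⟨⟨c, h⟩, by simp [Fin.ext_iff]⟩
  · refine Or.inr ⟨⟨(c : ℕ) - l, by omega⟩, ?_⟩
    simp only [Fin.ext_iff, Fin.coe_natAdd]
    omega

private lemma mem_setPre_inl (U : Set (tensor M N).T) (q : M.P) :
    Sum.inl q ∈ setPre (tensor M N) U ↔ q ∈ setPre M (Sum.inl ⁻¹' U) := by
  rw [show (Sum.inl q : M.P ⊕ N.P) ∈ setPre (tensor M N) U ↔
      ∃ u, ∃ _ : u ∈ U, (Sum.inl q : M.P ⊕ N.P) ∈ (tensor M N).pre u from Set.mem_iUnion₂]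
  simp only [setPre, Set.mem_iUnion, Set.mem_preimage]
  constructor
  · rintro ⟨u, hu, hq⟩
    match u with
    | Sum.inl t =>
        have hq' : (Sum.inl q : M.P ⊕ N.P) ∈ Sum.inl '' M.pre t := hq
        exact ⟨t, hu, (Sum.inl_injective.mem_set_image).mp hq'⟩
    | Sum.inr t =>
        have hq' : (Sum.inl q : M.P ⊕ N.P) ∈ Sum.inr '' N.pre t := hq
        obtain ⟨x, -, hx⟩ := hq'
        exact absurd hx (by simp)
  · rintro ⟨t, ht, hq⟩
    exact ⟨Sum.inl t, ht, ⟨q, hq, rfl⟩⟩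

private lemma mem_setPre_inr (U : Set (tensor M N).T) (q : N.P) :
    Sum.inr q ∈ setPre (tensor M N) U ↔ q ∈ setPre N (Sum.inr ⁻¹' U) := by
  rw [show (Sum.inr q : M.P ⊕ N.P) ∈ setPre (tensor M N) U ↔
      ∃ u, ∃ _ : u ∈ U, (Sum.inr q : M.P ⊕ N.P) ∈ (tensor M N).pre u from Set.mem_iUnion₂]
  simp only [setPre, Set.mem_iUnion, Set.mem_preimage]
  constructor
  · rintro ⟨u, hu, hq⟩
    match u with
    | Sum.inr t =>
        have hq' : (Sum.inr q : M.P ⊕ N.P) ∈ Sum.inr '' N.pre t := hq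
        exact ⟨t, hu, (Sum.inr_injective.mem_set_image).mp hq'⟩
    | Sum.inl t =>
        have hq' : (Sum.inr q : M.P ⊕ N.P) ∈ Sum.inl '' M.pre t := hq
        obtain ⟨x, -, hx⟩ := hq'
        exact absurd hx (by simp)
  · rintro ⟨t, ht, hq⟩
    exact ⟨Sum.inr t, ht, ⟨q, hq, rfl⟩⟩

private lemma mem_setPost_inl (U : Set (tensor M N).T) (q : M.P) :
    Sum.inl q ∈ setPost (tensor M N) U ↔ q ∈ setPost M (Sum.inl ⁻¹' U) := by
  rw [show (Sum.inl q : M.P ⊕ N.P) ∈ setPost (tensor M N) U ↔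
      ∃ u, ∃ _ : u ∈ U, (Sum.inl q : M.P ⊕ N.P) ∈ (tensor M N).post u from Set.mem_iUnion₂]
  simp only [setPost, Set.mem_iUnion, Set.mem_preimage]
  constructor
  · rintro ⟨u, hu, hq⟩
    match u with
    | Sum.inl t =>
        have hq' : (Sum.inl q : M.P ⊕ N.P) ∈ Sum.inl '' M.post t := hq
        exact ⟨t, hu, (Sum.inl_injective.mem_set_image).mp hq'⟩
    | Sum.inr t =>
        have hq' : (Sum.inl q : M.P ⊕ N.P) ∈ Sum.inr '' N.post t := hq
        obtain ⟨x, -, hx⟩ := hq'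
        exact absurd hx (by simp)
  · rintro ⟨t, ht, hq⟩
    exact ⟨Sum.inl t, ht, ⟨q, hq, rfl⟩⟩

private lemma mem_setPost_inr (U : Set (tensor M N).T) (q : N.P) :
    Sum.inr q ∈ setPost (tensor M N) U ↔ q ∈ setPost N (Sum.inr ⁻¹' U) := by
  rw [show (Sum.inr q : M.P ⊕ N.P) ∈ setPost (tensor M N) U ↔
      ∃ u, ∃ _ : u ∈ U, (Sum.inr q : M.P ⊕ N.P) ∈ (tensor M N).post u from Set.mem_iUnion₂]
  simp only [setPost, Set.mem_iUnion, Set.mem_preimage]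
  constructor
  · rintro ⟨u, hu, hq⟩
    match u with
    | Sum.inr t =>
        have hq' : (Sum.inr q : M.P ⊕ N.P) ∈ Sum.inr '' N.post t := hq
        exact ⟨t, hu, (Sum.inr_injective.mem_set_image).mp hq'⟩
    | Sum.inl t =>
        have hq' : (Sum.inr q : M.P ⊕ N.P) ∈ Sum.inl '' M.post t := hq
        obtain ⟨x, -, hx⟩ := hq'
        exact absurd hx (by simp)
  · rintro ⟨t, ht, hq⟩
    exact ⟨Sum.inr t, ht, ⟨q, hq, rfl⟩⟩

private lemma mem_setSrc_castAdd (U : Set (tensor M N).T) (i : Fin l) :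
    Fin.castAdd k i ∈ setSrc (tensor M N) U ↔ i ∈ setSrc M (Sum.inl ⁻¹' U) := by
  simp only [setSrc, Set.mem_iUnion, Set.mem_preimage]
  constructor
  · rintro ⟨u, hu, hq⟩
    match u with
    | Sum.inl t =>
        have hq' : Fin.castAdd k i ∈ Fin.castAdd k '' M.src t := hq
        exact ⟨t, hu, ((Fin.castAdd_injective l k).mem_set_image).mp hq'⟩
    | Sum.inr t =>
        have hq' : Fin.castAdd k i ∈ Fin.natAdd l '' N.src t := hq
        obtain ⟨j, -, hj⟩ := hq'
        exact absurd hj.symm (castAdd_ne_natAdd i j)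
  · rintro ⟨t, ht, hq⟩
    exact ⟨Sum.inl t, ht, ⟨i, hq, rfl⟩⟩

private lemma mem_setSrc_natAdd (U : Set (tensor M N).T) (j : Fin k) :
    Fin.natAdd l j ∈ setSrc (tensor M N) U ↔ j ∈ setSrc N (Sum.inr ⁻¹' U) := by
  simp only [setSrc, Set.mem_iUnion, Set.mem_preimage]
  constructor
  · rintro ⟨u, hu, hq⟩
    match u with
    | Sum.inr t =>
        have hq' : Fin.natAdd l j ∈ Fin.natAdd l '' N.src t := hq
        exact ⟨t, hu, (natAdd_injective.mem_set_image).mp hq'⟩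
    | Sum.inl t =>
        have hq' : Fin.natAdd l j ∈ Fin.castAdd k '' M.src t := hq
        obtain ⟨i, -, hi⟩ := hq'
        exact absurd hi (castAdd_ne_natAdd i j)
  · rintro ⟨t, ht, hq⟩
    exact ⟨Sum.inr t, ht, ⟨j, hq, rfl⟩⟩

private lemma mem_setTgt_castAdd (U : Set (tensor M N).T) (i : Fin m) :
    Fin.castAdd n i ∈ setTgt (tensor M N) U ↔ i ∈ setTgt M (Sum.inl ⁻¹' U) := by
  simp only [setTgt, Set.mem_iUnion, Set.mem_preimage]
  constructor
  · rintro ⟨u, hu, hq⟩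
    match u with
    | Sum.inl t =>
        have hq' : Fin.castAdd n i ∈ Fin.castAdd n '' M.tgt t := hq
        exact ⟨t, hu, ((Fin.castAdd_injective m n).mem_set_image).mp hq'⟩
    | Sum.inr t =>
        have hq' : Fin.castAdd n i ∈ Fin.natAdd m '' N.tgt t := hq
        obtain ⟨j, -, hj⟩ := hq'
        exact absurd hj.symm (castAdd_ne_natAdd i j)
  · rintro ⟨t, ht, hq⟩
    exact ⟨Sum.inl t, ht, ⟨i, hq, rfl⟩⟩

private lemma mem_setTgt_natAdd (U : Set (tensor M N).T) (j : Fin n) :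
    Fin.natAdd m j ∈ setTgt (tensor M N) U ↔ j ∈ setTgt N (Sum.inr ⁻¹' U) := by
  simp only [setTgt, Set.mem_iUnion, Set.mem_preimage]
  constructor
  · rintro ⟨u, hu, hq⟩
    match u with
    | Sum.inr t =>
        have hq' : Fin.natAdd m j ∈ Fin.natAdd m '' N.tgt t := hq
        exact ⟨t, hu, (natAdd_injective.mem_set_image).mp hq'⟩
    | Sum.inl t =>
        have hq' : Fin.natAdd m j ∈ Fin.castAdd n '' M.tgt t := hq
        obtain ⟨i, -, hi⟩ := hq'
        exact absurd hi (castAdd_ne_natAdd i j)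
  · rintro ⟨t, ht, hq⟩
    exact ⟨Sum.inr t, ht, ⟨j, hq, rfl⟩⟩

end TensorFires

private lemma inl_mem_inr_image {γ δ : Type} (q : γ) (S : Set δ) :
    (Sum.inl q : γ ⊕ δ) ∈ Sum.inr '' S ↔ False := by simp

private lemma inr_mem_inl_image {γ δ : Type} (q : δ) (S : Set γ) :
    (Sum.inr q : γ ⊕ δ) ∈ Sum.inl '' S ↔ False := by simp

private lemma mark_iff {γ : Type} {x : γ} {X' X : Set γ} {a b a' b' : Prop}
    (h : x ∈ X' ↔ (x ∈ X ∧ ¬ a) ∨ b) (ha : a ↔ a') (hb : b ↔ b') :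
    x ∈ X' ↔ (x ∈ X ∧ ¬ a') ∨ b' := by rw [← ha, ← hb]; exact h

/-- Compositionality of `⊗` w.r.t. step firing semantics:
`(X+Y) →⟨α,β⟩ (X′+Y′)` in `⟦M ⊗ N⟧` iff
`X →⟨α ∩ [l], β ∩ [m]⟩ X′` in `⟦M⟧` and
`Y →⟨{i | l+i ∈ α}, {j | m+j ∈ β}⟩ Y′` in `⟦N⟧`. -/
theorem tensor_fires {l m k n : ℕ} (M : NetB l m) (N : NetB k n)
    (hM : IsContention M) (hN : IsContention N)
    (X X' : Set M.P) (Y Y' : Set N.P)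
    (α : Set (Fin (l + k))) (β : Set (Fin (m + n))) :
    Fires (tensor M N) (Sum.inl '' X ∪ Sum.inr '' Y) (Sum.inl '' X' ∪ Sum.inr '' Y') α β ↔
      (Fires M X X' {i | Fin.castAdd k i ∈ α} {j | Fin.castAdd n j ∈ β} ∧
       Fires N Y Y' {i | Fin.natAdd l i ∈ α} {j | Fin.natAdd m j ∈ β}) := by
  constructor
  · rintro ⟨U, miU, hpre, hpost, hmk, rfl, rfl⟩
    constructor
    · refine ⟨Sum.inl ⁻¹' U, ?_, ?_, ?_, ?_, ?_, ?_⟩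
      · intro u hu v hv hcon
        exact Sum.inl_injective (miU _ hu _ hv hcon)
      · intro q hq
        have h1 : (Sum.inl q : M.P ⊕ N.P) ∈ setPre (tensor M N) U :=
          (mem_setPre_inl U q).mpr hq
        rcases hpre h1 with ⟨x, hx, hxq⟩ | ⟨x, hx, hxq⟩
        · rwa [← Sum.inl_injective hxq]
        · exact absurd hxq (by simp)
      · apply Set.eq_empty_iff_forall_notMem.mpr
        rintro q ⟨hq1, hq2⟩
        have h1 : (Sum.inl q : M.P ⊕ N.P) ∈ setPost (tensor M N) U :=
          (mem_setPost_inl U q).mpr hq1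
        exact Set.eq_empty_iff_forall_notMem.mp hpost _
          ⟨h1, Or.inl ⟨q, hq2, rfl⟩⟩
      · ext q
        have h : (Sum.inl q : M.P ⊕ N.P) ∈ Sum.inl '' X' ∪ Sum.inr '' Y' ↔
            (Sum.inl q : M.P ⊕ N.P) ∈
              ((Sum.inl '' X ∪ Sum.inr '' Y) \ setPre (tensor M N) U) ∪
                setPost (tensor M N) U := Set.ext_iff.mp hmk _
        replace h : q ∈ X' ↔ (q ∈ X ∧ ¬ (Sum.inl q : M.P ⊕ N.P) ∈ setPre (tensor M N) U) ∨
            (Sum.inl q : M.P ⊕ N.P) ∈ setPost (tensor M N) U := by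
          have e1 : (Sum.inl q : M.P ⊕ N.P) ∈ Sum.inl '' X' ∪ Sum.inr '' Y' ↔ q ∈ X' := by simp
          have e2 : (Sum.inl q : M.P ⊕ N.P) ∈ Sum.inl '' X ∪ Sum.inr '' Y ↔ q ∈ X := by simp
          exact e1.symm.trans (h.trans (or_congr_left (and_congr_left' e2)))
        simp only [Set.mem_union, Set.mem_diff]
        exact mark_iff h (mem_setPre_inl U q) (mem_setPost_inl U q)
      · ext i
        simp only [Set.mem_setOf_eq, mem_setSrc_castAdd]
      · ext i
        simp only [Set.mem_setOf_eq, mem_setTgt_castAdd]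
    · refine ⟨Sum.inr ⁻¹' U, ?_, ?_, ?_, ?_, ?_, ?_⟩
      · intro u hu v hv hcon
        exact Sum.inr_injective (miU _ hu _ hv hcon)
      · intro q hq
        have h1 : (Sum.inr q : M.P ⊕ N.P) ∈ setPre (tensor M N) U :=
          (mem_setPre_inr U q).mpr hq
        rcases hpre h1 with ⟨x, hx, hxq⟩ | ⟨x, hx, hxq⟩
        · exact absurd hxq (by simp)
        · rwa [← Sum.inr_injective hxq]
      · apply Set.eq_empty_iff_forall_notMem.mpr
        rintro q ⟨hq1, hq2⟩
        have h1 : (Sum.inr q : M.P ⊕ N.P) ∈ setPost (tensor M N) U :=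
          (mem_setPost_inr U q).mpr hq1
        exact Set.eq_empty_iff_forall_notMem.mp hpost _
          ⟨h1, Or.inr ⟨q, hq2, rfl⟩⟩
      · ext q
        have h : (Sum.inr q : M.P ⊕ N.P) ∈ Sum.inl '' X' ∪ Sum.inr '' Y' ↔
            (Sum.inr q : M.P ⊕ N.P) ∈
              ((Sum.inl '' X ∪ Sum.inr '' Y) \ setPre (tensor M N) U) ∪
                setPost (tensor M N) U := Set.ext_iff.mp hmk _
        replace h : q ∈ Y' ↔ (q ∈ Y ∧ ¬ (Sum.inr q : M.P ⊕ N.P) ∈ setPre (tensor M N) U) ∨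
            (Sum.inr q : M.P ⊕ N.P) ∈ setPost (tensor M N) U := by
          have e1 : (Sum.inr q : M.P ⊕ N.P) ∈ Sum.inl '' X' ∪ Sum.inr '' Y' ↔ q ∈ Y' := by simp
          have e2 : (Sum.inr q : M.P ⊕ N.P) ∈ Sum.inl '' X ∪ Sum.inr '' Y ↔ q ∈ Y := by simp
          exact e1.symm.trans (h.trans (or_congr_left (and_congr_left' e2)))
        simp only [Set.mem_union, Set.mem_diff]
        exact mark_iff h (mem_setPre_inr U q) (mem_setPost_inr U q)
      · ext i
        simp only [Set.mem_setOf_eq, mem_setSrc_natAdd]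
      · ext i
        simp only [Set.mem_setOf_eq, mem_setTgt_natAdd]
  · rintro ⟨⟨UM, miM, hpreM, hpostM, hmkM, hsrcM, htgtM⟩,
      ⟨UN, miN, hpreN, hpostN, hmkN, hsrcN, htgtN⟩⟩
    have hUM : (Sum.inl ⁻¹' (Sum.inl '' UM ∪ Sum.inr '' UN) : Set M.T) = UM := by
      ext t; simp
    have hUN : (Sum.inr ⁻¹' (Sum.inl '' UM ∪ Sum.inr '' UN) : Set N.T) = UN := by
      ext t; simp
    refine ⟨Sum.inl '' UM ∪ Sum.inr '' UN, ?_, ?_, ?_, ?_, ?_, ?_⟩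
    · intro u hu v hv hcon
      rcases hu with ⟨a, ha, rfl⟩ | ⟨a, ha, rfl⟩ <;>
        rcases hv with ⟨b, hb, rfl⟩ | ⟨b, hb, rfl⟩
      · exact congrArg Sum.inl (miM a ha b hb hcon)
      · exact hcon.elim
      · exact hcon.elim
      · exact congrArg Sum.inr (miN a ha b hb hcon)
    · intro p hp
      cases p with
      | inl q =>
          have hq : q ∈ setPre M UM := by
            rw [← hUM]; exact (mem_setPre_inl _ q).mp hp
          exact Or.inl ⟨q, hpreM hq, rfl⟩
      | inr q =>
          have hq : q ∈ setPre N UN := by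
            rw [← hUN]; exact (mem_setPre_inr _ q).mp hp
          exact Or.inr ⟨q, hpreN hq, rfl⟩
    · apply Set.eq_empty_iff_forall_notMem.mpr
      rintro p ⟨h1, h2⟩
      cases p with
      | inl q =>
          have hq1 : q ∈ setPost M UM := by
            rw [← hUM]; exact (mem_setPost_inl _ q).mp h1
          have hq2 : q ∈ X := by
            rcases h2 with ⟨x, hx, hxq⟩ | ⟨x, hx, hxq⟩
            · rwa [← Sum.inl_injective hxq]
            · exact absurd hxq (by simp)
          exact Set.eq_empty_iff_forall_notMem.mp hpostM q ⟨hq1, hq2⟩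
      | inr q =>
          have hq1 : q ∈ setPost N UN := by
            rw [← hUN]; exact (mem_setPost_inr _ q).mp h1
          have hq2 : q ∈ Y := by
            rcases h2 with ⟨x, hx, hxq⟩ | ⟨x, hx, hxq⟩
            · exact absurd hxq (by simp)
            · rwa [← Sum.inr_injective hxq]
          exact Set.eq_empty_iff_forall_notMem.mp hpostN q ⟨hq1, hq2⟩
    · ext p
      cases p with
      | inl q =>
          have h := Set.ext_iff.mp hmkM q
          simp only [Set.mem_union, Set.mem_diff] at h
          show (Sum.inl q : M.P ⊕ N.P) ∈ Sum.inl '' X' ∪ Sum.inr '' Y' ↔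
            (Sum.inl q : M.P ⊕ N.P) ∈
              ((Sum.inl '' X ∪ Sum.inr '' Y) \
                  setPre (tensor M N) (Sum.inl '' UM ∪ Sum.inr '' UN)) ∪
                setPost (tensor M N) (Sum.inl '' UM ∪ Sum.inr '' UN)
          simp only [Set.mem_union, Set.mem_diff,
            Sum.inl_injective.mem_set_image, inl_mem_inr_image, or_false, false_or]
          have e2 : (Sum.inl q : M.P ⊕ N.P) ∈ Sum.inl '' X ∪ Sum.inr '' Y ↔ q ∈ X := by simp
          refine Iff.trans ?_ (or_congr_left (and_congr_left' e2.symm))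
          exact mark_iff h
            (((mem_setPre_inl _ q).trans (Iff.of_eq (congrArg (q ∈ setPre M ·) hUM))).symm)
            (((mem_setPost_inl _ q).trans (Iff.of_eq (congrArg (q ∈ setPost M ·) hUM))).symm)
      | inr q =>
          have h := Set.ext_iff.mp hmkN q
          simp only [Set.mem_union, Set.mem_diff] at h
          show (Sum.inr q : M.P ⊕ N.P) ∈ Sum.inl '' X' ∪ Sum.inr '' Y' ↔
            (Sum.inr q : M.P ⊕ N.P) ∈
              ((Sum.inl '' X ∪ Sum.inr '' Y) \
                  setPre (tensor M N) (Sum.inl '' UM ∪ Sum.inr '' UN)) ∪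
                setPost (tensor M N) (Sum.inl '' UM ∪ Sum.inr '' UN)
          simp only [Set.mem_union, Set.mem_diff,
            Sum.inr_injective.mem_set_image, inr_mem_inl_image, or_false, false_or]
          have e2 : (Sum.inr q : M.P ⊕ N.P) ∈ Sum.inl '' X ∪ Sum.inr '' Y ↔ q ∈ Y := by simp
          refine Iff.trans ?_ (or_congr_left (and_congr_left' e2.symm))
          exact mark_iff h
            (((mem_setPre_inr _ q).trans (Iff.of_eq (congrArg (q ∈ setPre N ·) hUN))).symm)
            (((mem_setPost_inr _ q).trans (Iff.of_eq (congrArg (q ∈ setPost N ·) hUN))).symm)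
    · ext c
      rcases fin_add_cases c with ⟨i, rfl⟩ | ⟨j, rfl⟩
      · rw [mem_setSrc_castAdd]; erw [hUM]; rw [hsrcM]; exact Iff.rfl
      · rw [mem_setSrc_natAdd]; erw [hUN]; rw [hsrcN]; exact Iff.rfl
    · ext c
      rcases fin_add_cases c with ⟨i, rfl⟩ | ⟨j, rfl⟩
      · rw [mem_setTgt_castAdd]; erw [hUM]; rw [htgtM]; exact Iff.rfl
      · rw [mem_setTgt_natAdd]; erw [hUN]; rw [htgtN]; exact Iff.rfl


end NWB
end

section
/- In a pure composition, every transition is a synchronisation of at most one transition on each side: if the composition of nets with boundaries N_l : k → n and N_r : n → l is pure, then every minimal synchronisation (U, V) of N_l and N_r satisfies |U| ≤ 1 and |V| ≤ 1, and the common boundary set tgt(U) = src(V) contains at most one port. -/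
namespace NWB

lemma bRight_injective {k l : ℕ} {N : NetB k l} :
    Function.Injective (bRight (N := N)) := by
  intro a b h
  exact Sum.inr_injective (Sum.inr_injective h)

lemma bLeft_injective {k l : ℕ} {N : NetB k l} :
    Function.Injective (bLeft (N := N)) := by
  intro a b h
  exact Sum.inl_injective (Sum.inr_injective h)

lemma tgt_subsingleton_of_pure_left {k n l : ℕ} {Nl : NetB k n} {Nr : NetB n l}
    (hpure : Pure Nl Nr) (t : Nl.T) : (Nl.tgt t).Subsingleton := by
  intro i hi j hj
  by_contra hij
  have hiP : bRight i ∈ tports Nl t := Set.mem_union_right _ ⟨i, hi, rfl⟩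
  have hjP : bRight j ∈ tports Nl t := Set.mem_union_right _ ⟨j, hj, rfl⟩
  have hss : ({bRight j} : Set (Port Nl)) ⊂ tports Nl t :=
    (Set.ssubset_iff_of_subset (Set.singleton_subset_iff.2 hjP)).2
      ⟨bRight i, hiP, by
        simp only [Set.mem_singleton_iff]
        exact fun h => hij (bRight_injective h)⟩
  exact hpure.1 j _ ⟨t, hss, rfl⟩ i
    ⟨hiP, by
      simp only [Set.mem_singleton_iff]
      exact fun h => hij (bRight_injective h)⟩

lemma src_subsingleton_of_pure_right {k n l : ℕ} {Nl : NetB k n} {Nr : NetB n l}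
    (hpure : Pure Nl Nr) (t : Nr.T) : (Nr.src t).Subsingleton := by
  intro i hi j hj
  by_contra hij
  have hiP : bLeft i ∈ tports Nr t := by
    refine Set.mem_union_left _ (Set.mem_union_right _ ⟨i, hi, rfl⟩)
  have hjP : bLeft j ∈ tports Nr t := by
    refine Set.mem_union_left _ (Set.mem_union_right _ ⟨j, hj, rfl⟩)
  have hss : ({bLeft j} : Set (Port Nr)) ⊂ tports Nr t :=
    (Set.ssubset_iff_of_subset (Set.singleton_subset_iff.2 hjP)).2
      ⟨bLeft i, hiP, by
        simp only [Set.mem_singleton_iff]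
        exact fun h => hij (bLeft_injective h)⟩
  exact hpure.2 j _ ⟨t, hss, rfl⟩ i
    ⟨hiP, by
      simp only [Set.mem_singleton_iff]
      exact fun h => hij (bLeft_injective h)⟩

lemma mem_setTgt {k l : ℕ} {N : NetB k l} {U : Set N.T} {j : Fin l} :
    j ∈ setTgt N U ↔ ∃ u ∈ U, j ∈ N.tgt u := by
  simp [setTgt]

lemma mem_setSrc {k l : ℕ} {N : NetB k l} {U : Set N.T} {j : Fin k} :
    j ∈ setSrc N U ↔ ∃ u ∈ U, j ∈ N.src u := by
  simp [setSrc]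

/-- in a pure composition every minimal synchronisation
`(U, V)` consists of at most one transition on each side, and the common
boundary set `tgt(U) = src(V)` contains at most one port. -/
theorem pure_minimal_sync_subsingleton {k n l : ℕ} (Nl : NetB k n) (Nr : NetB n l)
    (hNl : IsContention Nl) (hNr : IsContention Nr) (hpure : Pure Nl Nr) :
    ∀ s : Sync Nl Nr, s.Minimal →
      s.U.Subsingleton ∧ s.V.Subsingleton ∧ (setTgt Nl s.U).Subsingleton := by
  intro s hs
  obtain ⟨hnt, hmin⟩ := hs
  have L1 : ∀ t, (Nl.tgt t).Subsingleton := tgt_subsingleton_of_pure_left hpure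
  have L2 : ∀ t, (Nr.src t).Subsingleton := src_subsingleton_of_pure_right hpure
  have hU : s.U.Subsingleton := by
    intro u₁ h₁ u₂ h₂
    have hbd : setTgt Nl {u₁} = setSrc Nr {v ∈ s.V | (Nr.src v ∩ Nl.tgt u₁).Nonempty} := by
      ext j
      rw [mem_setTgt, mem_setSrc]
      constructor
      · rintro ⟨u, hu, hju⟩
        rcases hu with rfl
        have hjV : j ∈ setSrc Nr s.V := s.bd ▸ mem_setTgt.2 ⟨u, h₁, hju⟩
        obtain ⟨v, hv, hjv⟩ := mem_setSrc.1 hjV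
        exact ⟨v, ⟨hv, ⟨j, hjv, hju⟩⟩, hjv⟩
      · rintro ⟨v, ⟨hv, i, hiv, hiu⟩, hjv⟩
        have := L2 v hjv hiv
        exact ⟨u₁, rfl, this ▸ hiu⟩
    let s' : Sync Nl Nr :=
      ⟨{u₁}, {v ∈ s.V | (Nr.src v ∩ Nl.tgt u₁).Nonempty},
        fun a ha b hb _ => by
          rcases ha with rfl; rcases hb with rfl; rfl,
        fun a ha b hb h => s.miV a ha.1 b hb.1 h, hbd⟩
    have hsub : s'.U ⊆ s.U := Set.singleton_subset_iff.2 h₁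
    rcases hmin s' hsub (fun v hv => hv.1) with htr | ⟨hUeq, _⟩
    · exact absurd htr.1 (by
        intro h
        exact (Set.singleton_ne_empty u₁) h)
    · have h₂' : u₂ ∈ s'.U := hUeq.symm ▸ h₂
      exact (Set.mem_singleton_iff.1 h₂').symm
  have hV : s.V.Subsingleton := by
    intro v₁ h₁ v₂ h₂
    have hbd : setTgt Nl {u ∈ s.U | (Nl.tgt u ∩ Nr.src v₁).Nonempty} = setSrc Nr {v₁} := by
      ext j
      rw [mem_setTgt, mem_setSrc]
      constructor
      · rintro ⟨u, ⟨hu, i, hiu, hiv⟩, hju⟩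
        have := L1 u hju hiu
        exact ⟨v₁, rfl, this ▸ hiv⟩
      · rintro ⟨v, hv, hjv⟩
        rcases hv with rfl
        have hjU : j ∈ setTgt Nl s.U := s.bd ▸ mem_setSrc.2 ⟨v, h₁, hjv⟩
        obtain ⟨u, hu, hju⟩ := mem_setTgt.1 hjU
        exact ⟨u, ⟨hu, ⟨j, hju, hjv⟩⟩, hju⟩
    let s' : Sync Nl Nr :=
      ⟨{u ∈ s.U | (Nl.tgt u ∩ Nr.src v₁).Nonempty}, {v₁},
        fun a ha b hb h => s.miU a ha.1 b hb.1 h,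
        fun a ha b hb _ => by
          rcases ha with rfl; rcases hb with rfl; rfl, hbd⟩
    have hsub : s'.V ⊆ s.V := Set.singleton_subset_iff.2 h₁
    rcases hmin s' (fun u hu => hu.1) hsub with htr | ⟨_, hVeq⟩
    · exact absurd htr.2 (by
        intro h
        exact (Set.singleton_ne_empty v₁) h)
    · have h₂' : v₂ ∈ s'.V := hVeq.symm ▸ h₂
      exact (Set.mem_singleton_iff.1 h₂').symm
  refine ⟨hU, hV, ?_⟩
  intro i hi j hj
  obtain ⟨u, hu, hiu⟩ := mem_setTgt.1 hi
  obtain ⟨u', hu', hju'⟩ := mem_setTgt.1 hj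
  have := hU hu hu'
  subst this
  exact L1 u hiu hju'

end NWB
end

section
/- For every n ≥ 2 and every oriented partition (P_l, P_r) of the places of the clique net C_n, the networks between the two parts have exactly two elements: |net(P_l → P_r)| = |net(P_r → P_l)| = 2. -/
namespace NWB

section CliqueAux

variable {n : ℕ}

lemma portIn_ne_portOut (i j : Fin n) :
    (portIn (N := clique n) i) ≠ portOut j := by
  intro h
  injection h with h1
  injection h1

lemma portOut_ne_portIn (i j : Fin n) :
    (portOut (N := clique n) i) ≠ portIn j := by
  intro h
  injection h with h1
  injection h1

lemma portIn_inj {i j : Fin n} (h : (portIn (N := clique n) i) = portIn j) :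
    i = j := by
  injection h with h1
  injection h1

lemma portOut_inj {i j : Fin n} (h : (portOut (N := clique n) i) = portOut j) :
    i = j := by
  injection h with h1
  injection h1

lemma clique_tports (t : (clique n).T) :
    tports (clique n) t = {portOut t.1.1, portIn t.1.2} := by
  show (portOut (N := clique n) '' ({t.1.1} : Set (Fin n))) ∪
      (portIn (N := clique n) '' ({t.1.2} : Set (Fin n))) ∪
      (bLeft (N := clique n) '' (∅ : Set (Fin 0))) ∪
      (bRight (N := clique n) '' (∅ : Set (Fin 0))) = _
  simp only [Set.image_singleton, Set.image_empty, Set.union_empty,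
    Set.singleton_union]
  exact (congrArg₂ (· ∪ ·) Set.image_singleton Set.image_singleton).trans Set.singleton_union

lemma clique_conn_out (i : Fin n) :
    conn (clique n) (portOut i) =
      {K | ∃ j : Fin n, j ≠ i ∧ K = {portIn j}} := by
  ext K
  simp only [conn, Set.mem_setOf_eq]
  constructor
  · rintro ⟨⟨⟨a, b⟩, hab⟩, hsub, rfl⟩
    rw [clique_tports (n := n) ⟨(a, b), hab⟩] at hsub ⊢
    have hmem := hsub.1 rfl
    rw [Set.mem_insert_iff, Set.mem_singleton_iff] at hmem
    rcases hmem with h | h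
    · obtain rfl := portOut_inj h
      exact ⟨b, fun h' => hab h'.symm, Set.pair_diff_left (portOut_ne_portIn i b)⟩
    · exact absurd h (portOut_ne_portIn i b)
  · rintro ⟨j, hj, rfl⟩
    refine ⟨⟨(i, j), fun h => hj h.symm⟩, ?_, ?_⟩
    · rw [clique_tports (n := n) ⟨(i, j), fun h => hj h.symm⟩]
      constructor
      · intro x hx
        rw [Set.mem_singleton_iff] at hx
        subst hx
        exact Set.mem_insert _ _
      · intro hsub
        exact portIn_ne_portOut j i (hsub (Set.mem_insert_of_mem _ rfl))
    · rw [clique_tports (n := n) ⟨(i, j), fun h => hj h.symm⟩]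
      exact (Set.pair_diff_left (portOut_ne_portIn i j)).symm

lemma clique_conn_in (i : Fin n) :
    conn (clique n) (portIn i) =
      {K | ∃ j : Fin n, j ≠ i ∧ K = {portOut j}} := by
  ext K
  simp only [conn, Set.mem_setOf_eq]
  constructor
  · rintro ⟨⟨⟨a, b⟩, hab⟩, hsub, rfl⟩
    rw [clique_tports (n := n) ⟨(a, b), hab⟩] at hsub ⊢
    have hmem := hsub.1 rfl
    rw [Set.mem_insert_iff, Set.mem_singleton_iff] at hmem
    rcases hmem with h | h
    · exact absurd h (portIn_ne_portOut i a)
    · obtain rfl := portIn_inj h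
      exact ⟨a, hab, Set.pair_diff_right (portOut_ne_portIn a i)⟩
  · rintro ⟨j, hj, rfl⟩
    refine ⟨⟨(j, i), hj⟩, ?_, ?_⟩
    · rw [clique_tports (n := n) ⟨(j, i), hj⟩]
      constructor
      · intro x hx
        rw [Set.mem_singleton_iff] at hx
        subst hx
        exact Set.mem_insert_of_mem _ rfl
      · intro hsub
        exact portOut_ne_portIn j i (hsub (Set.mem_insert _ _))
    · rw [clique_tports (n := n) ⟨(j, i), hj⟩]
      exact (Set.pair_diff_right (portOut_ne_portIn j i)).symm

/-- The ports of a set of places in the clique net. -/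
def pset (S : Set (Fin n)) : Set (Port (clique n)) :=
  (portIn '' S) ∪ (portOut '' S)

lemma eportsL_clique (S : Set (Fin n)) : eportsL (clique n) S = pset S := by
  unfold eportsL pset
  have h : Set.range (bLeft (N := clique n)) = ∅ := by
    rw [Set.range_eq_empty_iff]
    exact ⟨fun i => Fin.elim0 i⟩
  rw [h, Set.union_empty]

lemma eportsR_clique (S : Set (Fin n)) : eportsR (clique n) S = pset S := by
  unfold eportsR pset
  have h : Set.range (bRight (N := clique n)) = ∅ := by
    rw [Set.range_eq_empty_iff]
    exact ⟨fun i => Fin.elim0 i⟩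
  rw [h, Set.union_empty]

lemma portIn_mem_pset {S : Set (Fin n)} {j : Fin n} :
    (portIn j : Port (clique n)) ∈ pset S ↔ j ∈ S := by
  unfold pset
  rw [Set.mem_union]
  constructor
  · rintro (⟨x, hx, h⟩ | ⟨x, hx, h⟩)
    · obtain rfl := portIn_inj h
      exact hx
    · exact absurd h.symm (portIn_ne_portOut j x)
  · intro h; exact Or.inl ⟨j, h, rfl⟩

lemma portOut_mem_pset {S : Set (Fin n)} {j : Fin n} :
    (portOut j : Port (clique n)) ∈ pset S ↔ j ∈ S := by
  unfold pset
  rw [Set.mem_union]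
  constructor
  · rintro (⟨x, hx, h⟩ | ⟨x, hx, h⟩)
    · exact absurd h (portIn_ne_portOut x j)
    · obtain rfl := portOut_inj h
      exact hx
  · intro h; exact Or.inr ⟨j, h, rfl⟩

lemma connR_out (S : Set (Fin n)) (i : Fin n) :
    connR (clique n) (pset S) (portOut i) =
      {K | ∃ j : Fin n, j ≠ i ∧ j ∈ S ∧ K = {portIn j}} := by
  ext K
  constructor
  · rintro ⟨K0, hK0, hne, rfl⟩
    rw [clique_conn_out] at hK0
    obtain ⟨j, hj, rfl⟩ := hK0
    obtain ⟨x, hx1, hx2⟩ := hne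
    rw [Set.mem_singleton_iff] at hx1
    subst hx1
    have hjS : j ∈ S := portIn_mem_pset.mp hx2
    exact ⟨j, hj, hjS, Set.inter_eq_left.mpr (Set.singleton_subset_iff.mpr hx2)⟩
  · rintro ⟨j, hj, hjS, rfl⟩
    refine ⟨{portIn j}, ?_, ?_, ?_⟩
    · rw [clique_conn_out]; exact ⟨j, hj, rfl⟩
    · exact ⟨portIn j, rfl, portIn_mem_pset.mpr hjS⟩
    · exact (Set.inter_eq_left.mpr
        (Set.singleton_subset_iff.mpr (portIn_mem_pset.mpr hjS))).symm

lemma connR_in (S : Set (Fin n)) (i : Fin n) :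
    connR (clique n) (pset S) (portIn i) =
      {K | ∃ j : Fin n, j ≠ i ∧ j ∈ S ∧ K = {portOut j}} := by
  ext K
  constructor
  · rintro ⟨K0, hK0, hne, rfl⟩
    rw [clique_conn_in] at hK0
    obtain ⟨j, hj, rfl⟩ := hK0
    obtain ⟨x, hx1, hx2⟩ := hne
    rw [Set.mem_singleton_iff] at hx1
    subst hx1
    have hjS : j ∈ S := portOut_mem_pset.mp hx2
    exact ⟨j, hj, hjS, Set.inter_eq_left.mpr (Set.singleton_subset_iff.mpr hx2)⟩
  · rintro ⟨j, hj, hjS, rfl⟩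
    refine ⟨{portOut j}, ?_, ?_, ?_⟩
    · rw [clique_conn_in]; exact ⟨j, hj, rfl⟩
    · exact ⟨portOut j, rfl, portOut_mem_pset.mpr hjS⟩
    · exact (Set.inter_eq_left.mpr
        (Set.singleton_subset_iff.mpr (portOut_mem_pset.mpr hjS))).symm

/-- The "in-side" network element. -/
def netIn (S : Set (Fin n)) : Set (Set (Port (clique n))) :=
  {K | ∃ j ∈ S, K = {portIn j}}

/-- The "out-side" network element. -/
def netOut (S : Set (Fin n)) : Set (Set (Port (clique n))) :=
  {K | ∃ j ∈ S, K = {portOut j}}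

lemma connR_out_eq (A B : Set (Fin n)) (hd : ∀ a ∈ A, ∀ b ∈ B, b ≠ a)
    (i : Fin n) (hi : i ∈ A) :
    connR (clique n) (pset B) (portOut i) = netIn B := by
  rw [connR_out]
  ext K
  constructor
  · rintro ⟨j, _, hjS, rfl⟩; exact ⟨j, hjS, rfl⟩
  · rintro ⟨j, hjS, rfl⟩; exact ⟨j, hd i hi j hjS, hjS, rfl⟩

lemma connR_in_eq (A B : Set (Fin n)) (hd : ∀ a ∈ A, ∀ b ∈ B, b ≠ a)
    (i : Fin n) (hi : i ∈ A) :
    connR (clique n) (pset B) (portIn i) = netOut B := by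
  rw [connR_in]
  ext K
  constructor
  · rintro ⟨j, _, hjS, rfl⟩; exact ⟨j, hjS, rfl⟩
  · rintro ⟨j, hjS, rfl⟩; exact ⟨j, hd i hi j hjS, hjS, rfl⟩

lemma netIn_ne_netOut {S : Set (Fin n)} (hS : S.Nonempty) :
    netIn S ≠ netOut S := by
  obtain ⟨j, hj⟩ := hS
  intro h
  have h1 : ({portIn j} : Set (Port (clique n))) ∈ netIn S := ⟨j, hj, rfl⟩
  rw [h] at h1
  obtain ⟨j', _, hj'⟩ := h1
  exact portIn_ne_portOut j j' (Set.singleton_eq_singleton_iff.mp hj')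

lemma network_eq (A B : Set (Fin n)) (hA : A.Nonempty)
    (hd : ∀ a ∈ A, ∀ b ∈ B, b ≠ a) :
    {c | ∃ q ∈ pset A, c = connR (clique n) (pset B) q} = {netIn B, netOut B} := by
  ext c
  constructor
  · rintro ⟨q, hq, rfl⟩
    unfold pset at hq
    rw [Set.mem_union] at hq
    rcases hq with ⟨p, hp, rfl⟩ | ⟨p, hp, rfl⟩
    · rw [connR_in_eq A B hd p hp]
      exact Set.mem_insert_iff.mpr (Or.inr rfl)
    · rw [connR_out_eq A B hd p hp]
      exact Set.mem_insert _ _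
  · obtain ⟨p, hp⟩ := hA
    rintro (rfl | rfl)
    · exact ⟨portOut p, Or.inr ⟨p, hp, rfl⟩, (connR_out_eq A B hd p hp).symm⟩
    · exact ⟨portIn p, Or.inl ⟨p, hp, rfl⟩, (connR_in_eq A B hd p hp).symm⟩

end CliqueAux

/-- for every `n ≥ 2` and every oriented partition
`(P_l, P_r)` of the places of the clique net `C_n`, the networks between the
two parts have exactly two elements. -/
theorem clique_network_ncard (n : ℕ) (hn : 2 ≤ n) (Pl Pr : Set (clique n).P)
    (hPl : Pl.Nonempty) (hPr : Pr.Nonempty) (hdisj : Pl ∩ Pr = ∅)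
    (hunion : Pl ∪ Pr = Set.univ) :
    (networkLR (clique n) Pl Pr).ncard = 2 ∧
    (networkRL (clique n) Pl Pr).ncard = 2 := by
  have hd1 : ∀ a ∈ Pl, ∀ b ∈ Pr, b ≠ a := by
    intro a ha b hb h
    subst h
    have hm : b ∈ Pl ∩ Pr := ⟨ha, hb⟩
    rw [hdisj] at hm
    exact hm
  have hd2 : ∀ a ∈ Pr, ∀ b ∈ Pl, b ≠ a := fun a ha b hb h => hd1 b hb a ha h.symm
  have hLR : networkLR (clique n) Pl Pr = {netIn Pr, netOut Pr} := by
    unfold networkLR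
    rw [← network_eq Pl Pr hPl hd1]
    ext c
    rw [eportsL_clique (n := n) Pl, eportsR_clique (n := n) Pr]
  have hRL : networkRL (clique n) Pl Pr = {netIn Pl, netOut Pl} := by
    unfold networkRL
    rw [← network_eq Pr Pl hPr hd2]
    ext c
    rw [eportsL_clique (n := n) Pl, eportsR_clique (n := n) Pr]
  rw [hLR, hRL]
  exact ⟨Set.ncard_pair (netIn_ne_netOut hPr), Set.ncard_pair (netIn_ne_netOut hPl)⟩

end NWB
end

section
/- For every n ≥ 2, the subset net P_n has decomposition width 1, i.e. there exists a wiring decomposition of P_n of width 1. -/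
namespace NWB

/-! ### Auxiliary machinery -/

theorem Sync.ext' {l m n : ℕ} {M : NetB l m} {N : NetB m n} {s s' : Sync M N}
    (hU : s.U = s'.U) (hV : s.V = s'.V) : s = s' := by
  cases s; cases s'; cases hU; cases hV; rfl

def NetIso.trans {k l : ℕ} {A B C : NetB k l} (i : NetIso A B) (j : NetIso B C) :
    NetIso A C where
  ep := i.ep.trans j.ep
  et := i.et.trans j.et
  pre_eq t := by
    show C.pre (j.et (i.et t)) = _
    rw [j.pre_eq, i.pre_eq, Set.image_image]; rfl
  post_eq t := by
    show C.post (j.et (i.et t)) = _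
    rw [j.post_eq, i.post_eq, Set.image_image]; rfl
  src_eq t := (j.src_eq (i.et t)).trans (i.src_eq t)
  tgt_eq t := (j.tgt_eq (i.et t)).trans (i.tgt_eq t)
  con_iff t u := (j.con_iff (i.et t) (i.et u)).trans (i.con_iff t u)


def NetIso.refl {k l : ℕ} (M : NetB k l) : NetIso M M where
  ep := Equiv.refl _
  et := Equiv.refl _
  pre_eq t := by simp
  post_eq t := by simp
  src_eq t := rfl
  tgt_eq t := rfl
  con_iff _ _ := Iff.rfl

def NetIso.symm {k l : ℕ} {M N : NetB k l} (i : NetIso M N) : NetIso N M where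
  ep := i.ep.symm
  et := i.et.symm
  pre_eq t := by
    have h := i.pre_eq (i.et.symm t)
    rw [Equiv.apply_symm_apply] at h
    rw [h, Equiv.symm_image_image]
  post_eq t := by
    have h := i.post_eq (i.et.symm t)
    rw [Equiv.apply_symm_apply] at h
    rw [h, Equiv.symm_image_image]
  src_eq t := by
    have h := i.src_eq (i.et.symm t)
    rw [Equiv.apply_symm_apply] at h
    exact h.symm
  tgt_eq t := by
    have h := i.tgt_eq (i.et.symm t)
    rw [Equiv.apply_symm_apply] at h
    exact h.symm
  con_iff t u := by
    have h := i.con_iff (i.et.symm t) (i.et.symm u)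
    rw [Equiv.apply_symm_apply, Equiv.apply_symm_apply] at h
    exact h.symm

theorem NetIso.setPre_image {k l : ℕ} {M M' : NetB k l} (i : NetIso M M') (U : Set M.T) :
    setPre M' (⇑i.et '' U) = ⇑i.ep '' setPre M U := by
  unfold setPre
  rw [Set.biUnion_image, Set.image_iUnion₂]
  simp only [i.pre_eq]

theorem NetIso.setPost_image {k l : ℕ} {M M' : NetB k l} (i : NetIso M M') (U : Set M.T) :
    setPost M' (⇑i.et '' U) = ⇑i.ep '' setPost M U := by
  unfold setPost
  rw [Set.biUnion_image, Set.image_iUnion₂]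
  simp only [i.post_eq]

theorem NetIso.setSrc_image {k l : ℕ} {M M' : NetB k l} (i : NetIso M M') (U : Set M.T) :
    setSrc M' (⇑i.et '' U) = setSrc M U := by
  unfold setSrc
  rw [Set.biUnion_image]
  simp only [i.src_eq]

theorem NetIso.setTgt_image {k l : ℕ} {M M' : NetB k l} (i : NetIso M M') (U : Set M.T) :
    setTgt M' (⇑i.et '' U) = setTgt M U := by
  unfold setTgt
  rw [Set.biUnion_image]
  simp only [i.tgt_eq]

theorem NetIso.setCon_image {k l : ℕ} {M M' : NetB k l} (i : NetIso M M') (U V : Set M.T) :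
    setCon M' (⇑i.et '' U) (⇑i.et '' V) ↔ setCon M U V := by
  constructor
  · rintro ⟨u', ⟨u, hu, rfl⟩, v', ⟨v, hv, rfl⟩, h⟩
    exact ⟨u, hu, v, hv, (i.con_iff u v).mp h⟩
  · rintro ⟨u, hu, v, hv, h⟩
    exact ⟨i.et u, ⟨u, hu, rfl⟩, i.et v, ⟨v, hv, rfl⟩, (i.con_iff u v).mpr h⟩

/-- Transport of synchronisations along isomorphisms of both components. -/
def Sync.map {l m n : ℕ} {M M' : NetB l m} {N N' : NetB m n}
    (i : NetIso M M') (j : NetIso N N') (s : Sync M N) : Sync M' N' where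
  U := ⇑i.et '' s.U
  V := ⇑j.et '' s.V
  miU := by
    rintro _ ⟨u, hu, rfl⟩ _ ⟨v, hv, rfl⟩ h
    rw [i.con_iff] at h
    rw [s.miU u hu v hv h]
  miV := by
    rintro _ ⟨u, hu, rfl⟩ _ ⟨v, hv, rfl⟩ h
    rw [j.con_iff] at h
    rw [s.miV u hu v hv h]
  bd := by rw [i.setTgt_image, j.setSrc_image, s.bd]

theorem Sync.map_map {l m n : ℕ} {M M' : NetB l m} {N N' : NetB m n}
    (i : NetIso M M') (j : NetIso N N') (s : Sync M N) :
    Sync.map i.symm j.symm (Sync.map i j s) = s := by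
  apply Sync.ext'
  · exact Equiv.symm_image_image i.et s.U
  · exact Equiv.symm_image_image j.et s.V

theorem Sync.map_map' {l m n : ℕ} {M M' : NetB l m} {N N' : NetB m n}
    (i : NetIso M M') (j : NetIso N N') (s : Sync M' N') :
    Sync.map i j (Sync.map i.symm j.symm s) = s := by
  apply Sync.ext'
  · exact Equiv.image_symm_image i.et s.U
  · exact Equiv.image_symm_image j.et s.V

theorem Sync.map_minimal {l m n : ℕ} {M M' : NetB l m} {N N' : NetB m n}
    (i : NetIso M M') (j : NetIso N N') (s : Sync M N) (hs : s.Minimal) :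
    (Sync.map i j s).Minimal := by
  constructor
  · intro h
    obtain ⟨hU, hV⟩ := h
    exact hs.1 ⟨Set.image_eq_empty.mp hU, Set.image_eq_empty.mp hV⟩
  · intro s' hU hV
    have hU2 : (Sync.map i.symm j.symm s').U ⊆ s.U := by
      calc ⇑i.et.symm '' s'.U ⊆ ⇑i.et.symm '' (⇑i.et '' s.U) := Set.image_mono hU
        _ = s.U := Equiv.symm_image_image i.et s.U
    have hV2 : (Sync.map i.symm j.symm s').V ⊆ s.V := by
      calc ⇑j.et.symm '' s'.V ⊆ ⇑j.et.symm '' (⇑j.et '' s.V) := Set.image_mono hV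
        _ = s.V := Equiv.symm_image_image j.et s.V
    rcases hs.2 _ hU2 hV2 with htriv | heq
    · left
      obtain ⟨h1, h2⟩ := htriv
      exact ⟨Set.image_eq_empty.mp h1, Set.image_eq_empty.mp h2⟩
    · right
      constructor
      · show s'.U = ⇑i.et '' s.U
        have h1 : ⇑i.et '' (⇑i.et.symm '' s'.U) = ⇑i.et '' s.U :=
          congrArg (fun A => ⇑i.et '' A) heq.1
        rw [Equiv.image_symm_image] at h1
        exact h1
      · show s'.V = ⇑j.et '' s.V
        have h2 : ⇑j.et '' (⇑j.et.symm '' s'.V) = ⇑j.et '' s.V :=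
          congrArg (fun A => ⇑j.et '' A) heq.2
        rw [Equiv.image_symm_image] at h2
        exact h2

theorem Sync.map_minimal_iff {l m n : ℕ} {M M' : NetB l m} {N N' : NetB m n}
    (i : NetIso M M') (j : NetIso N N') (s : Sync M N) :
    s.Minimal ↔ (Sync.map i j s).Minimal := by
  constructor
  · exact Sync.map_minimal i j s
  · intro h
    have := Sync.map_minimal i.symm j.symm _ h
    rwa [Sync.map_map] at this

/-- Transport of synchronisations as an equivalence. -/
def NetIso.syncEquiv {l m n : ℕ} {M M' : NetB l m} {N N' : NetB m n}
    (i : NetIso M M') (j : NetIso N N') : Sync M N ≃ Sync M' N' where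
  toFun := Sync.map i j
  invFun := Sync.map i.symm j.symm
  left_inv := Sync.map_map i j
  right_inv := Sync.map_map' i j

/-- Congruence of composition with respect to isomorphism. -/
def NetIso.compCongr {l m n : ℕ} {M M' : NetB l m} {N N' : NetB m n}
    (i : NetIso M M') (j : NetIso N N') : NetIso (comp M N) (comp M' N') where
  ep := Equiv.sumCongr i.ep j.ep
  et := (i.syncEquiv j).subtypeEquiv (fun s => Sync.map_minimal_iff i j s)
  pre_eq := by
    rintro ⟨s, hs⟩
    show Sum.inl '' setPre M' (⇑i.et '' s.U) ∪ Sum.inr '' setPre N' (⇑j.et '' s.V) = _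
    show _ = ⇑(Equiv.sumCongr i.ep j.ep) '' (Sum.inl '' setPre M s.U ∪ Sum.inr '' setPre N s.V)
    rw [i.setPre_image, j.setPre_image, Set.image_union, Set.image_image, Set.image_image,
      Set.image_image, Set.image_image]
    rfl
  post_eq := by
    rintro ⟨s, hs⟩
    show Sum.inl '' setPost M' (⇑i.et '' s.U) ∪ Sum.inr '' setPost N' (⇑j.et '' s.V) = _
    show _ = ⇑(Equiv.sumCongr i.ep j.ep) '' (Sum.inl '' setPost M s.U ∪ Sum.inr '' setPost N s.V)
    rw [i.setPost_image, j.setPost_image, Set.image_union, Set.image_image, Set.image_image,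
      Set.image_image, Set.image_image]
    rfl
  src_eq := by
    rintro ⟨s, hs⟩
    exact i.setSrc_image s.U
  tgt_eq := by
    rintro ⟨s, hs⟩
    exact j.setTgt_image s.V
  con_iff := by
    rintro ⟨s, hs⟩ ⟨s', hs'⟩
    show setCon M' (⇑i.et '' s.U) (⇑i.et '' s'.U) ∨ setCon N' (⇑j.et '' s.V) (⇑j.et '' s'.V) ↔ _
    rw [i.setCon_image, j.setCon_image]
    rfl

/-- Removing a trivial cast. -/
def castNetIso {k l : ℕ} (h1 : k = k) (h2 : l = l) (N : NetB k l) :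
    NetIso (castNet h1 h2 N) N where
  ep := Equiv.refl _
  et := Equiv.refl _
  pre_eq t := by exact (Set.image_id _).symm
  post_eq t := by exact (Set.image_id _).symm
  src_eq t := by
    show N.src t = Fin.cast h1 '' N.src t
    have : Fin.cast h1 = id := funext fun i => Fin.ext rfl
    rw [this, Set.image_id]
  tgt_eq t := by
    show N.tgt t = Fin.cast h2 '' N.tgt t
    have : Fin.cast h2 = id := funext fun i => Fin.ext rfl
    rw [this, Set.image_id]
  con_iff t u := Iff.rfl

theorem setPre_singleton {k l : ℕ} (M : NetB k l) (u : M.T) : setPre M {u} = M.pre u := by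
  simp [setPre]

theorem setPost_singleton {k l : ℕ} (M : NetB k l) (u : M.T) : setPost M {u} = M.post u := by
  simp [setPost]

theorem setSrc_singleton {k l : ℕ} (M : NetB k l) (u : M.T) : setSrc M {u} = M.src u := by
  simp [setSrc]

theorem setTgt_singleton {k l : ℕ} (M : NetB k l) (u : M.T) : setTgt M {u} = M.tgt u := by
  simp [setTgt]

/-- The "product" net of a composition along a single always-used boundary port. -/
def pairNet {a b : ℕ} (M : NetB a 1) (N : NetB 1 b) : NetB a b where
  P := M.P ⊕ N.P
  T := M.T × N.T
  finP := by haveI := M.finP; haveI := N.finP; exact inferInstance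
  finT := by haveI := M.finT; haveI := N.finT; exact inferInstance
  pre t := (Sum.inl '' M.pre t.1) ∪ (Sum.inr '' N.pre t.2)
  post t := (Sum.inl '' M.post t.1) ∪ (Sum.inr '' N.post t.2)
  src t := M.src t.1
  tgt t := N.tgt t.2
  con _ _ := True

def mkSync {a b : ℕ} {M : NetB a 1} {N : NetB 1 b}
    (hM : ∀ t, M.tgt t = Set.univ) (hN : ∀ t, N.src t = Set.univ)
    (u : M.T) (v : N.T) : Sync M N where
  U := {u}
  V := {v}
  miU := by
    intro x hx y hy _
    rw [Set.eq_of_mem_singleton hx, Set.eq_of_mem_singleton hy]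
  miV := by
    intro x hx y hy _
    rw [Set.eq_of_mem_singleton hx, Set.eq_of_mem_singleton hy]
  bd := by rw [setTgt_singleton, setSrc_singleton, hM, hN]

theorem mkSync_minimal {a b : ℕ} {M : NetB a 1} {N : NetB 1 b}
    (hM : ∀ t, M.tgt t = Set.univ) (hN : ∀ t, N.src t = Set.univ)
    (u : M.T) (v : N.T) : (mkSync hM hN u v).Minimal := by
  constructor
  · intro h
    exact (Set.singleton_ne_empty u) h.1
  · intro s' hU hV
    rcases Set.subset_singleton_iff_eq.mp hU with hU0 | hU1
    · rcases Set.subset_singleton_iff_eq.mp hV with hV0 | hV1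
      · exact Or.inl ⟨hU0, hV0⟩
      · exfalso
        have h := s'.bd
        rw [hU0, hV1, setSrc_singleton, hN] at h
        have : (0 : Fin 1) ∈ setTgt M (∅ : Set M.T) := by rw [h]; trivial
        simp [setTgt] at this
    · rcases Set.subset_singleton_iff_eq.mp hV with hV0 | hV1
      · exfalso
        have h := s'.bd
        rw [hU1, hV0, setTgt_singleton, hM] at h
        have : (0 : Fin 1) ∈ setSrc N (∅ : Set N.T) := by rw [← h]; trivial
        simp [setSrc] at this
      · exact Or.inr ⟨hU1, hV1⟩

/-- Classification of the composition along a single always-used boundary port. -/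
noncomputable def compPairIso {a b : ℕ} (M : NetB a 1) (N : NetB 1 b)
    (hM : ∀ t, M.tgt t = Set.univ) (hN : ∀ t, N.src t = Set.univ)
    (hMc : ∀ t u, M.con t u) (hNc : ∀ t u, N.con t u) :
    NetIso (pairNet M N) (comp M N) where
  ep := Equiv.refl _
  et := Equiv.ofBijective
    (fun p => ⟨mkSync hM hN p.1 p.2, mkSync_minimal hM hN p.1 p.2⟩) (by
    constructor
    · intro p q h
      have hU : ({p.1} : Set M.T) = {q.1} := congrArg (fun s => s.1.U) h
      have hV : ({p.2} : Set N.T) = {q.2} := congrArg (fun s => s.1.V) h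
      exact Prod.ext (Set.singleton_eq_singleton_iff.mp hU)
        (Set.singleton_eq_singleton_iff.mp hV)
    · rintro ⟨s, hs⟩
      have hne : s.U.Nonempty ∨ s.V.Nonempty := by
        by_contra h
        push_neg at h
        exact hs.1 ⟨h.1, h.2⟩
      have huv : ∃ u ∈ s.U, ∃ v, v ∈ s.V := by
        rcases hne with ⟨u, hu⟩ | ⟨v, hv⟩
        · have h0 : (0 : Fin 1) ∈ setTgt M s.U := by
            exact Set.mem_biUnion hu (by rw [hM]; trivial)
          rw [s.bd] at h0
          obtain ⟨v, hv, -⟩ := Set.mem_iUnion₂.mp h0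
          exact ⟨u, hu, v, hv⟩
        · have h0 : (0 : Fin 1) ∈ setSrc N s.V := by
            exact Set.mem_biUnion hv (by rw [hN]; trivial)
          rw [← s.bd] at h0
          obtain ⟨u, hu, -⟩ := Set.mem_iUnion₂.mp h0
          exact ⟨u, hu, v, hv⟩
      obtain ⟨u, hu, v, hv⟩ := huv
      refine ⟨(u, v), ?_⟩
      have hsub := hs.2 (mkSync hM hN u v)
        (Set.singleton_subset_iff.mpr hu) (Set.singleton_subset_iff.mpr hv)
      rcases hsub with htriv | ⟨hU, hV⟩
      · exact absurd htriv.1 (Set.singleton_ne_empty u)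
      · exact Subtype.ext (Sync.ext' hU hV))
  pre_eq := by
    rintro ⟨u, v⟩
    show Sum.inl '' setPre M {u} ∪ Sum.inr '' setPre N {v} = _
    rw [setPre_singleton, setPre_singleton]
    exact (Set.image_id _).symm
  post_eq := by
    rintro ⟨u, v⟩
    show Sum.inl '' setPost M {u} ∪ Sum.inr '' setPost N {v} = _
    rw [setPost_singleton, setPost_singleton]
    exact (Set.image_id _).symm
  src_eq := by
    rintro ⟨u, v⟩
    exact setSrc_singleton M u
  tgt_eq := by
    rintro ⟨u, v⟩
    exact setTgt_singleton N v
  con_iff := by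
    rintro ⟨u, v⟩ ⟨u', v'⟩
    show setCon M {u} {u'} ∨ setCon N {v} {v'} ↔ True
    simp only [iff_true]
    exact Or.inl ⟨u, rfl, u', rfl, hMc u u'⟩

/-! ### The concrete leaf nets -/

/-- The right tail net `Q α : 1 → 0`: a transition for every subset of places. -/
def Qnet (α : Type) [Finite α] : NetB 1 0 where
  P := α
  T := Set α
  finP := ‹_›
  finT := inferInstance
  pre _ := ∅
  post A := A
  src _ := Set.univ
  tgt _ := ∅
  con _ _ := True

/-- The one-place choice net `B : 1 → 1`. -/
def netB : NetB 1 1 where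
  P := Unit
  T := Set Unit
  finP := inferInstance
  finT := inferInstance
  pre _ := ∅
  post s := s
  src _ := Set.univ
  tgt _ := Set.univ
  con _ _ := True

/-- The source net `S : 0 → 1`. -/
def netS : NetB 0 1 where
  P := Unit
  T := Unit
  finP := inferInstance
  finT := inferInstance
  pre _ := Set.univ
  post _ := ∅
  src _ := ∅
  tgt _ := Set.univ
  con _ _ := True

def QnetCongr {α β : Type} [Finite α] [Finite β] (e : α ≃ β) :
    NetIso (Qnet α) (Qnet β) where
  ep := e
  et := Equiv.Set.congr e
  pre_eq t := by simp [Qnet]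
  post_eq t := by
    show ⇑e '' t = ⇑e '' t
    rfl
  src_eq t := rfl
  tgt_eq t := rfl
  con_iff _ _ := Iff.rfl

def stepIso (α : Type) [Finite α] :
    NetIso (pairNet netB (Qnet α)) (Qnet (Unit ⊕ α)) where
  ep := Equiv.refl _
  et := (Equiv.sumArrowEquivProdArrow Unit α Prop).symm
  pre_eq := by
    rintro ⟨s, A⟩
    show (∅ : Set (Unit ⊕ α)) = _
    simp [pairNet, netB, Qnet]
  post_eq := by
    rintro ⟨s, A⟩
    show (fun x => Sum.elim s A x : Set (Unit ⊕ α)) =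
      ⇑(Equiv.refl ((pairNet netB (Qnet α)).P)) '' ((pairNet netB (Qnet α)).post (s, A))
    rw [show ⇑(Equiv.refl ((pairNet netB (Qnet α)).P)) = id from rfl, Set.image_id]
    ext x
    rcases x with x | x
    · constructor
      · intro h
        exact Or.inl ⟨x, h, rfl⟩
      · rintro (⟨y, hy, hxy⟩ | ⟨y, hy, hxy⟩)
        · obtain rfl := Sum.inl.inj hxy
          exact hy
        · simp at hxy
    · constructor
      · intro h
        exact Or.inr ⟨x, h, rfl⟩
      · rintro (⟨y, hy, hxy⟩ | ⟨y, hy, hxy⟩)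
        · simp at hxy
        · obtain rfl := Sum.inr.inj hxy
          exact hy
  src_eq := by rintro ⟨s, A⟩; rfl
  tgt_eq := by rintro ⟨s, A⟩; rfl
  con_iff _ _ := Iff.rfl

def sumUnitOption (α : Type) : Unit ⊕ α ≃ Option α where
  toFun := Sum.elim (fun _ => none) some
  invFun o := o.elim (Sum.inl ()) Sum.inr
  left_inv := by rintro (⟨⟩ | a) <;> rfl
  right_inv := by rintro (_ | a) <;> rfl

def topIso (n : ℕ) : NetIso (pairNet netS (Qnet (Fin n))) (subsetNet n) where
  ep := sumUnitOption (Fin n)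
  et := Equiv.punitProd (Set (Fin n))
  pre_eq := by
    rintro ⟨u, A⟩
    show ({none} : Set (Option (Fin n))) =
      Sum.elim (fun _ => none) some '' (Sum.inl '' Set.univ ∪ Sum.inr '' (∅ : Set (Fin n)))
    ext x
    rcases x with - | x
    · exact ⟨fun _ => ⟨Sum.inl (), Or.inl ⟨(), trivial, rfl⟩, rfl⟩, fun _ => Set.mem_singleton _⟩
    · constructor
      · intro h
        cases h
      · rintro ⟨y, (⟨z, -, rfl⟩ | ⟨z, hz, rfl⟩), h⟩
        · cases h
        · exact False.elim hz
  post_eq := by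
    rintro ⟨u, A⟩
    show some '' A =
      Sum.elim (fun _ => none) some '' (Sum.inl '' (∅ : Set Unit) ∪ Sum.inr '' A)
    ext x
    constructor
    · rintro ⟨y, hy, rfl⟩
      exact ⟨Sum.inr y, Or.inr ⟨y, hy, rfl⟩, rfl⟩
    · rintro ⟨y, (⟨z, hz, rfl⟩ | ⟨z, hz, rfl⟩), rfl⟩
      · exact False.elim hz
      · exact ⟨z, hz, rfl⟩
  src_eq := by rintro ⟨u, A⟩; rfl
  tgt_eq := by rintro ⟨u, A⟩; rfl
  con_iff _ _ := Iff.rfl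

/-! ### The wiring expression -/

inductive SVar : Type
  | s | b | q

def Avar : SVar → NetS
  | .s => ⟨0, 1, netS⟩
  | .b => ⟨1, 1, netB⟩
  | .q => ⟨1, 0, Qnet (Fin 0)⟩

def chainE : ℕ → WExpr SVar
  | 0 => .leaf .q
  | k + 1 => .seq (.leaf .b) (chainE k)

theorem chain_all (k : ℕ) : ∃ X : NetB 1 0,
    sem Avar (chainE k) = ⟨1, 0, X⟩ ∧ Nonempty (NetIso X (Qnet (Fin k))) ∧
      WT Avar (chainE k) ∧ HasWidth Avar 1 (chainE k) := by
  induction k with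
  | zero =>
    refine ⟨Qnet (Fin 0), rfl, ⟨?_⟩, trivial, ?_⟩
    · exact NetIso.refl _
    · refine ⟨le_refl 1, ?_, Nat.zero_le 1⟩
      simp [Avar, Qnet]
  | succ k ih =>
    obtain ⟨X, hsem, ⟨iso⟩, hWT, hW⟩ := ih
    have hsem' : sem Avar (chainE (k + 1)) = ⟨1, 0, comp (castNet rfl rfl netB) X⟩ := by
      show seqS (Avar .b) (sem Avar (chainE k)) = _
      rw [hsem]
      rfl
    refine ⟨comp (castNet rfl rfl netB) X, hsem', ⟨?_⟩, ?_, ?_⟩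
    · have i3 : NetIso (comp (castNet rfl rfl netB) X) (comp netB (Qnet (Fin k))) :=
        NetIso.compCongr (castNetIso rfl rfl netB) iso
      have i4 : NetIso (comp netB (Qnet (Fin k))) (pairNet netB (Qnet (Fin k))) :=
        (compPairIso netB (Qnet (Fin k)) (fun _ => rfl) (fun _ => rfl)
          (fun _ _ => trivial) (fun _ _ => trivial)).symm
      have i5 := stepIso (Fin k)
      have i6 : NetIso (Qnet (Unit ⊕ Fin k)) (Qnet (Fin (k + 1))) :=
        QnetCongr ((sumUnitOption (Fin k)).trans (finSuccEquiv k).symm)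
      exact i3.trans (i4.trans (i5.trans i6))
    · refine ⟨trivial, hWT, ?_⟩
      show (1 : ℕ) = (sem Avar (chainE k)).1
      rw [hsem]
    · refine ⟨⟨le_refl 1, ?_, le_refl 1⟩, hW, ?_, ?_⟩
      · simp [Avar, netB]
      · show (sem Avar (chainE (k+1))).1 ≤ 1
        rw [hsem']
      · show (sem Avar (chainE (k+1))).2.1 ≤ 1
        rw [hsem']
        exact Nat.zero_le 1


/-- for every `n ≥ 2`, the subset net `P_n` has
decomposition width 1. -/
theorem subsetNet_decompWidth (n : ℕ) (hn : 2 ≤ n) : HasDecompWidth (subsetNet n) 1 := by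
  obtain ⟨X, hsem, ⟨iso⟩, hWT, hW⟩ := chain_all n
  have hsem' : sem Avar (.seq (.leaf .s) (chainE n)) =
      ⟨0, 0, comp (castNet rfl rfl netS) X⟩ := by
    show seqS (Avar .s) (sem Avar (chainE n)) = _
    rw [hsem]
    rfl
  refine ⟨SVar, Avar, .seq (.leaf .s) (chainE n), ⟨?_, ?_, ?_⟩, ?_⟩
  · rintro (_ | _ | _) <;>
      exact ⟨fun _ => trivial, fun _ _ _ => trivial, fun _ _ _ => trivial⟩
  · refine ⟨trivial, hWT, ?_⟩
    show (1 : ℕ) = (sem Avar (chainE n)).1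
    rw [hsem]
  · rw [hsem']
    refine ⟨rfl, rfl, ⟨?_⟩⟩
    have i2 : NetIso (comp (castNet rfl rfl netS) X) (comp netS (Qnet (Fin n))) :=
      NetIso.compCongr (castNetIso rfl rfl netS) iso
    have i3 : NetIso (comp netS (Qnet (Fin n))) (pairNet netS (Qnet (Fin n))) :=
      (compPairIso netS (Qnet (Fin n)) (fun _ => rfl) (fun _ => rfl)
        (fun _ _ => trivial) (fun _ _ => trivial)).symm
    exact (castNetIso rfl rfl _).trans (i2.trans (i3.trans (topIso n)))
  · refine ⟨⟨Nat.zero_le 1, ?_, le_refl 1⟩, hW, ?_, ?_⟩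
    · simp [Avar, netS]
    · show (sem Avar (.seq (.leaf .s) (chainE n))).1 ≤ 1
      rw [hsem']
      exact Nat.zero_le 1
    · show (sem Avar (.seq (.leaf .s) (chainE n))).2.1 ≤ 1
      rw [hsem']
      exact Nat.zero_le 1


end NWB
end
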